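/- Let ν, θ, μ be ordinals below ω^ω such that θ + ν ≤ μ ≤ θ ⨣ ν and ν ⪯ μ. Then θ + ν ⪯ μ. -/

import Mathlib

open Ordinal

universe u

namespace Ordinal

/-- Natural (Hessenberg) addition of ordinals, as defined in Mathlib (December 2024),
which has since removed it. -/
noncomputable def nadd (a b : Ordinal.{u}) : Ordinal.{u} :=
  max (⨆ x : Set.Iio a, Order.succ (nadd x.1 b)) (⨆ x : Set.Iio b, Order.succ (nadd a x.1))
termination_by (a, b)
decreasing_by
  · exact Prod.Lex.left _ _ x.2
  · exact Prod.Lex.right _ x.2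

end Ordinal

infixl:65 " ♯ " => Ordinal.nadd

/-- The ordinal `ω^d * a_d + ... + ω * a_1 + a_0`, i.e. the ordinal below `ω^ω` with
Cantor normal form given by the natural-number coefficients `a 0, ..., a d`. -/
noncomputable def cnf (d : ℕ) (a : ℕ → ℕ) : Ordinal :=
  ((List.range (d + 1)).reverse.map (fun i => ω ^ i * (a i : Ordinal))).sum

/-- `α` is weaker than `β`: every Cantor coefficient of `α` is at most the
corresponding Cantor coefficient of `β`. -/
def Weaker (α β : Ordinal) : Prop :=
  ∃ (d : ℕ) (a b : ℕ → ℕ), α = cnf d a ∧ β = cnf d b ∧ ∀ i, a i ≤ b i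

namespace AW

lemma nadd_le_iff {a b c : Ordinal.{u}} :
    b ♯ c ≤ a ↔ (∀ b' < b, b' ♯ c < a) ∧ ∀ c' < c, b ♯ c' < a := by
  rw [nadd, max_le_iff, Ordinal.iSup_le_iff, Ordinal.iSup_le_iff]
  simp only [Order.succ_le_iff, Subtype.forall, Set.mem_Iio]

lemma lt_nadd_iff {a b c : Ordinal.{u}} :
    a < b ♯ c ↔ (∃ b' < b, a ≤ b' ♯ c) ∨ ∃ c' < c, a ≤ b ♯ c' := by
  rw [nadd, lt_max_iff, Ordinal.lt_iSup_iff, Ordinal.lt_iSup_iff]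
  simp only [Order.lt_succ_iff, Subtype.exists, Set.mem_Iio, exists_prop]

lemma nadd_lt_nadd_left {b c : Ordinal.{u}} (h : b < c) (a : Ordinal.{u}) : a ♯ b < a ♯ c :=
  lt_nadd_iff.2 (Or.inr ⟨b, h, le_rfl⟩)

lemma nadd_lt_nadd_right {b c : Ordinal.{u}} (h : b < c) (a : Ordinal.{u}) : b ♯ a < c ♯ a :=
  lt_nadd_iff.2 (Or.inl ⟨b, h, le_rfl⟩)

lemma nadd_le_nadd_left {b c : Ordinal.{u}} (h : b ≤ c) (a : Ordinal.{u}) : a ♯ b ≤ a ♯ c := by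
  rcases h.lt_or_eq with h | h
  · exact (nadd_lt_nadd_left h a).le
  · rw [h]

lemma nadd_le_nadd_right {b c : Ordinal.{u}} (h : b ≤ c) (a : Ordinal.{u}) : b ♯ a ≤ c ♯ a := by
  rcases h.lt_or_eq with h | h
  · exact (nadd_lt_nadd_right h a).le
  · rw [h]

lemma le_of_nadd_le_nadd_right {a b c : Ordinal.{u}} (h : b ♯ a ≤ c ♯ a) : b ≤ c :=
  not_lt.1 fun h' => (nadd_lt_nadd_right h' a).not_ge h

lemma nadd_comm_le (a b : Ordinal.{u}) : a ♯ b ≤ b ♯ a :=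
  nadd_le_iff.2 ⟨fun a' ha => (nadd_comm_le a' b).trans_lt (nadd_lt_nadd_left ha _),
    fun b' hb => (nadd_comm_le a b').trans_lt (nadd_lt_nadd_right hb _)⟩
termination_by (a, b)
decreasing_by
  · exact Prod.Lex.left _ _ ha
  · exact Prod.Lex.right _ hb

lemma nadd_comm (a b : Ordinal.{u}) : a ♯ b = b ♯ a :=
  le_antisymm (nadd_comm_le a b) (nadd_comm_le b a)

lemma le_nadd_self (a b : Ordinal.{u}) : a ≤ a ♯ b := by
  induction a using Ordinal.induction with
  | h a IH =>
    by_contra h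
    push_neg at h
    exact lt_irrefl _ ((IH _ h).trans_lt (nadd_lt_nadd_right h b))

lemma nadd_zero (a : Ordinal.{u}) : a ♯ 0 = a := by
  induction a using Ordinal.induction with
  | h a IH =>
    refine le_antisymm (nadd_le_iff.2 ⟨fun a' ha => ?_, fun c hc => ?_⟩) (le_nadd_self a 0)
    · rw [IH a' ha]; exact ha
    · exact absurd hc (not_lt_of_ge zero_le)

lemma zero_nadd (a : Ordinal.{u}) : 0 ♯ a = a := by
  rw [nadd_comm, nadd_zero]

lemma succ_nadd (a b : Ordinal.{u}) : Order.succ a ♯ b = Order.succ (a ♯ b) := by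
  induction b using Ordinal.induction with
  | h b IH =>
    refine le_antisymm (nadd_le_iff.2 ⟨fun a' ha => ?_, fun b' hb => ?_⟩) ?_
    · exact Order.lt_succ_iff.2 (nadd_le_nadd_right (Order.lt_succ_iff.1 ha) b)
    · rw [IH b' hb]
      exact Order.succ_lt_succ (nadd_lt_nadd_left hb a)
    · exact Order.succ_le_of_lt (nadd_lt_nadd_right (Order.lt_succ a) b)

lemma nat_nadd (n : ℕ) (a : Ordinal.{u}) : (n : Ordinal.{u}) ♯ a = a + n := by
  induction n with
  | zero => rw [Nat.cast_zero, zero_nadd, add_zero]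
  | succ n ih =>
    rw [Nat.cast_succ, ← Order.succ_eq_add_one, succ_nadd, ih]
    simp only [Order.succ_eq_add_one, add_assoc]

lemma add_le_nadd (a b : Ordinal.{u}) : a + b ≤ a ♯ b := by
  induction b using Ordinal.induction with
  | h b IH =>
    refine le_of_forall_lt fun c hc => ?_
    rcases lt_or_ge c a with h | h
    · exact h.trans_le (le_nadd_self a b)
    · have hrepr : c = a + (c - a) := (Ordinal.add_sub_cancel_of_le h).symm
      have hd : c - a < b := by
        rw [hrepr] at hc
        exact lt_of_add_lt_add_left hc
      rw [hrepr]
      exact (IH _ hd).trans_lt (nadd_lt_nadd_left hd a)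

lemma nadd_assoc_le (a b c : Ordinal.{u}) : a ♯ b ♯ c ≤ a ♯ (b ♯ c) := by
  refine nadd_le_iff.2 ⟨fun d hd => ?_, fun c' hc => ?_⟩
  · rcases lt_nadd_iff.1 hd with ⟨a', ha, hle⟩ | ⟨b', hb, hle⟩
    · exact ((nadd_le_nadd_right hle c).trans (nadd_assoc_le a' b c)).trans_lt
        (nadd_lt_nadd_right ha _)
    · exact ((nadd_le_nadd_right hle c).trans (nadd_assoc_le a b' c)).trans_lt
        (nadd_lt_nadd_left (nadd_lt_nadd_right hb c) _)
  · exact (nadd_assoc_le a b c').trans_lt (nadd_lt_nadd_left (nadd_lt_nadd_left hc b) _)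
termination_by (a, b, c)
decreasing_by
  · exact Prod.Lex.left _ _ ha
  · exact Prod.Lex.right _ (Prod.Lex.left _ _ hb)
  · exact Prod.Lex.right _ (Prod.Lex.right _ hc)

lemma nadd_assoc (a b c : Ordinal.{u}) : a ♯ b ♯ c = a ♯ (b ♯ c) := by
  refine le_antisymm (nadd_assoc_le a b c) ?_
  calc a ♯ (b ♯ c) = b ♯ c ♯ a := nadd_comm _ _
    _ ≤ b ♯ (c ♯ a) := nadd_assoc_le _ _ _
    _ = c ♯ a ♯ b := nadd_comm _ _
    _ ≤ c ♯ (a ♯ b) := nadd_assoc_le _ _ _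
    _ = a ♯ b ♯ c := nadd_comm _ _


lemma powo (k : ℕ) : (ω : Ordinal) ^ k = ω ^ (k : Ordinal) := (opow_natCast ω k).symm

lemma pow_pos' (k : ℕ) : (0 : Ordinal) < ω ^ k := by
  rw [powo]; exact opow_pos _ omega0_pos

lemma pow_le_pow' {k l : ℕ} (h : k ≤ l) : (ω : Ordinal) ^ k ≤ ω ^ l := by
  rw [powo, powo]; exact opow_le_opow_right omega0_pos (by exact_mod_cast h)

lemma decomp (k : ℕ) {x : Ordinal} (hx : x < ω ^ (k + 1)) :
    ∃ (p : ℕ) (r : Ordinal), r < ω ^ k ∧ x = ω ^ k * p + r := by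
  have hq : x / ω ^ k < ω := by
    rw [Ordinal.div_lt (pow_pos' k).ne']
    rwa [← pow_succ]
  obtain ⟨p, hp⟩ := lt_omega0.1 hq
  refine ⟨p, x % ω ^ k, Ordinal.mod_lt _ (pow_pos' k).ne', ?_⟩
  rw [← hp, Ordinal.div_add_mod]

/-- Key structural lemma about natural addition. -/
lemma key_aux (k : ℕ) (hcl : ∀ u v : Ordinal.{u}, u < ω ^ k → v < ω ^ k → u ♯ v < ω ^ k) :
    ∀ γ : Ordinal.{u}, ∀ (p q : ℕ) (r s : Ordinal.{u}), r < ω ^ k → s < ω ^ k →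
      (ω ^ k * p + r) ♯ (ω ^ k * q + s) = γ → γ = ω ^ k * (p + q : ℕ) + (r ♯ s) := by
  intro γ
  induction γ using Ordinal.induction with
  | h γ IH =>
    intro p q r s hr hs hγ
    subst hγ
    apply le_antisymm
    · rw [nadd_le_iff]
      constructor
      · intro a' ha'
        rcases lt_or_ge a' (ω ^ k * p) with h1 | h1
        · obtain ⟨n', hn'⟩ := lt_omega0.1 (lt_of_lt_of_le
            ((Ordinal.div_lt (pow_pos' k).ne').2 h1) (nat_lt_omega0 p).le)
          have hn'p : n' < p := by
            have := (Ordinal.div_lt (pow_pos' k).ne').2 h1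
            rw [hn'] at this
            exact_mod_cast this
          have hdm : ω ^ k * n' + a' % ω ^ k = a' := by
            rw [← hn', Ordinal.div_add_mod]
          have hr'' : a' % ω ^ k < ω ^ k := Ordinal.mod_lt _ (pow_pos' k).ne'
          have heq := IH (a' ♯ (ω ^ k * q + s))
            (nadd_lt_nadd_right ha' _) n' q (a' % ω ^ k) s hr'' hs (by rw [hdm])
          calc a' ♯ (ω ^ k * q + s) = ω ^ k * (n' + q : ℕ) + (a' % ω ^ k ♯ s) := heq
            _ < ω ^ k * (n' + q : ℕ) + ω ^ k := add_lt_add_right (hcl _ _ hr'' hs) _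
            _ = ω ^ k * ((n' + q : ℕ) + 1) := by rw [mul_add_one]
            _ = ω ^ k * ((n' + q + 1 : ℕ) : Ordinal) := by push_cast; rfl
            _ ≤ ω ^ k * ((p + q : ℕ) : Ordinal) :=
                mul_le_mul_right (by exact_mod_cast Nat.succ_le_of_lt (by omega)) _
            _ ≤ ω ^ k * (p + q : ℕ) + (r ♯ s) := le_self_add
        · have hrepr : a' = ω ^ k * p + (a' - ω ^ k * p) := (Ordinal.add_sub_cancel_of_le h1).symm
          have hr' : a' - ω ^ k * p < r := by
            rw [hrepr] at ha'
            exact lt_of_add_lt_add_left ha'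
          have heq := IH (a' ♯ (ω ^ k * q + s)) (nadd_lt_nadd_right ha' _) p q
            (a' - ω ^ k * p) s (hr'.trans hr) hs (by rw [← hrepr])
          rw [heq]
          exact add_lt_add_right (nadd_lt_nadd_right hr' _) _
      · intro b' hb'
        rcases lt_or_ge b' (ω ^ k * q) with h1 | h1
        · obtain ⟨n', hn'⟩ := lt_omega0.1 (lt_of_lt_of_le
            ((Ordinal.div_lt (pow_pos' k).ne').2 h1) (nat_lt_omega0 q).le)
          have hn'q : n' < q := by
            have := (Ordinal.div_lt (pow_pos' k).ne').2 h1
            rw [hn'] at this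
            exact_mod_cast this
          have hdm : ω ^ k * n' + b' % ω ^ k = b' := by
            rw [← hn', Ordinal.div_add_mod]
          have hs'' : b' % ω ^ k < ω ^ k := Ordinal.mod_lt _ (pow_pos' k).ne'
          have heq := IH ((ω ^ k * p + r) ♯ b')
            (nadd_lt_nadd_left hb' _) p n' r (b' % ω ^ k) hr hs'' (by rw [hdm])
          calc (ω ^ k * p + r) ♯ b' = ω ^ k * (p + n' : ℕ) + (r ♯ b' % ω ^ k) := heq
            _ < ω ^ k * (p + n' : ℕ) + ω ^ k := add_lt_add_right (hcl _ _ hr hs'') _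
            _ = ω ^ k * ((p + n' : ℕ) + 1) := by rw [mul_add_one]
            _ = ω ^ k * ((p + n' + 1 : ℕ) : Ordinal) := by push_cast; rfl
            _ ≤ ω ^ k * ((p + q : ℕ) : Ordinal) :=
                mul_le_mul_right (by exact_mod_cast Nat.succ_le_of_lt (by omega)) _
            _ ≤ ω ^ k * (p + q : ℕ) + (r ♯ s) := le_self_add
        · have hrepr : b' = ω ^ k * q + (b' - ω ^ k * q) := (Ordinal.add_sub_cancel_of_le h1).symm
          have hs' : b' - ω ^ k * q < s := by
            rw [hrepr] at hb'
            exact lt_of_add_lt_add_left hb'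
          have heq := IH ((ω ^ k * p + r) ♯ b') (nadd_lt_nadd_left hb' _) p q
            r (b' - ω ^ k * q) hr (hs'.trans hs) (by rw [← hrepr])
          rw [heq]
          exact add_lt_add_right (nadd_lt_nadd_left hs' _) _
    · by_contra hcon
      push_neg at hcon
      have hlt : ∀ δ < ω ^ k * (p + q : ℕ) + (r ♯ s),
          δ < (ω ^ k * p + r) ♯ (ω ^ k * q + s) := by
        intro δ hδ
        rcases lt_or_ge δ (ω ^ k * (p + q : ℕ)) with h1 | h1
        · apply lt_of_lt_of_le h1
          have : ω ^ k * ((p + q : ℕ) : Ordinal) = ω ^ k * p + ω ^ k * q := by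
            push_cast; rw [mul_add]
          rw [this]
          refine le_trans ?_ (add_le_nadd _ _)
          rw [add_assoc]
          exact add_le_add_right (le_trans (le_self_add) (le_add_self)) _
        · have hrepr : δ = ω ^ k * (p + q : ℕ) + (δ - ω ^ k * (p + q : ℕ)) :=
            (Ordinal.add_sub_cancel_of_le h1).symm
          have he : δ - ω ^ k * (p + q : ℕ) < r ♯ s := by
            rw [hrepr] at hδ
            exact lt_of_add_lt_add_left hδ
          rcases lt_nadd_iff.1 he with ⟨r', hr', hle⟩ | ⟨s', hs', hle⟩
          · have heq := IH ((ω ^ k * p + r') ♯ (ω ^ k * q + s))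
              (nadd_lt_nadd_right (add_lt_add_right hr' _) _) p q r' s (hr'.trans hr) hs rfl
            calc δ = ω ^ k * (p + q : ℕ) + (δ - ω ^ k * (p + q : ℕ)) := hrepr
              _ ≤ ω ^ k * (p + q : ℕ) + (r' ♯ s) := add_le_add_right hle _
              _ = (ω ^ k * p + r') ♯ (ω ^ k * q + s) := heq.symm
              _ < (ω ^ k * p + r) ♯ (ω ^ k * q + s) :=
                  nadd_lt_nadd_right (add_lt_add_right hr' _) _
          · have heq := IH ((ω ^ k * p + r) ♯ (ω ^ k * q + s'))
              (nadd_lt_nadd_left (add_lt_add_right hs' _) _) p q r s' hr (hs'.trans hs) rfl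
            calc δ = ω ^ k * (p + q : ℕ) + (δ - ω ^ k * (p + q : ℕ)) := hrepr
              _ ≤ ω ^ k * (p + q : ℕ) + (r ♯ s') := add_le_add_right hle _
              _ = (ω ^ k * p + r) ♯ (ω ^ k * q + s') := heq.symm
              _ < (ω ^ k * p + r) ♯ (ω ^ k * q + s) :=
                  nadd_lt_nadd_left (add_lt_add_right hs' _) _
      exact absurd (hlt _ hcon) (lt_irrefl _)

lemma close : ∀ (k : ℕ) (u v : Ordinal.{u}), u < ω ^ k → v < ω ^ k → u ♯ v < ω ^ k := by
  intro k
  induction k with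
  | zero =>
    intro u v hu hv
    rw [pow_zero, Ordinal.lt_one_iff_zero] at hu hv
    simp [hu, hv, nadd_zero]
  | succ k IH =>
    intro u v hu hv
    obtain ⟨p, r, hr, hu'⟩ := decomp k hu
    obtain ⟨q, s, hs, hv'⟩ := decomp k hv
    have := key_aux k IH (u ♯ v) p q r s hr hs (by rw [hu', hv'])
    rw [this, pow_succ]
    calc ω ^ k * (p + q : ℕ) + (r ♯ s) < ω ^ k * (p + q : ℕ) + ω ^ k :=
        add_lt_add_right (IH _ _ hr hs) _
      _ = ω ^ k * ((p + q + 1 : ℕ) : Ordinal) := by push_cast; rw [mul_add_one]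
      _ < ω ^ k * ω := (mul_lt_mul_iff_right₀ (pow_pos' k)).2 (nat_lt_omega0 _)

lemma key (k p q : ℕ) {r s : Ordinal.{u}} (hr : r < ω ^ k) (hs : s < ω ^ k) :
    (ω ^ k * p + r) ♯ (ω ^ k * q + s) = ω ^ k * (p + q : ℕ) + (r ♯ s) :=
  key_aux k (close k) _ p q r s hr hs rfl

lemma pow_nat_nadd (k m : ℕ) {x : Ordinal} (hx : x < ω ^ (k + 1)) :
    ω ^ k * m ♯ x = ω ^ k * m + x := by
  obtain ⟨q, s, hs, hx'⟩ := decomp k hx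
  have h0 : (0 : Ordinal) < ω ^ k := pow_pos' k
  have := key k m q h0 hs
  rw [add_zero] at this
  rw [hx', this, zero_nadd]
  push_cast
  rw [mul_add, add_assoc]

lemma add_lt_pow {k : ℕ} {u v : Ordinal} (hu : u < ω ^ k) (hv : v < ω ^ k) :
    u + v < ω ^ k := by
  rw [powo] at hu hv ⊢
  exact principal_add_omega0_opow _ hu hv

lemma cnf_zero' (a : ℕ → ℕ) : cnf 0 a = (a 0 : Ordinal) := by
  simp [cnf, List.range_succ]

lemma cnf_succ (d : ℕ) (a : ℕ → ℕ) :
    cnf (d + 1) a = ω ^ (d + 1) * (a (d + 1) : Ordinal) + cnf d a := by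
  simp [cnf, List.range_succ]

lemma cnf_lt (d : ℕ) (a : ℕ → ℕ) : cnf d a < ω ^ (d + 1) := by
  induction d with
  | zero =>
    rw [cnf_zero', pow_one]
    exact nat_lt_omega0 _
  | succ d IH =>
    rw [cnf_succ]
    calc ω ^ (d + 1) * (a (d + 1) : Ordinal) + cnf d a
        < ω ^ (d + 1) * (a (d + 1) : Ordinal) + ω ^ (d + 1) := add_lt_add_right IH _
      _ = ω ^ (d + 1) * ((a (d + 1) + 1 : ℕ) : Ordinal) := by push_cast; rw [mul_add_one]
      _ < ω ^ (d + 1) * ω := (mul_lt_mul_iff_right₀ (pow_pos' _)).2 (nat_lt_omega0 _)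
      _ = ω ^ (d + 1 + 1) := (pow_succ _ _).symm

lemma cnf_lt_omega (d : ℕ) (a : ℕ → ℕ) : cnf d a < ω ^ (ω : Ordinal) := by
  refine lt_of_lt_of_le (cnf_lt d a) ?_
  rw [powo]
  exact opow_le_opow_right omega0_pos (nat_lt_omega0 _).le

lemma cnf_nadd (d : ℕ) (a b : ℕ → ℕ) :
    cnf d a ♯ cnf d b = cnf d (fun i => a i + b i) := by
  induction d with
  | zero =>
    rw [cnf_zero', cnf_zero', cnf_zero', nat_nadd, ← Nat.cast_add, Nat.add_comm]
  | succ d IH =>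
    rw [cnf_succ, cnf_succ, cnf_succ, key (d + 1) (a (d + 1)) (b (d + 1))
      (cnf_lt d a) (cnf_lt d b), IH]

lemma cnf_congr (d : ℕ) {a b : ℕ → ℕ} (h : ∀ i ≤ d, a i = b i) : cnf d a = cnf d b := by
  unfold cnf
  congr 1
  apply List.map_congr_left
  intro i hi
  rw [List.mem_reverse, List.mem_range] at hi
  rw [h i (Nat.lt_succ_iff.1 hi)]

lemma cnf_exists (d : ℕ) : ∀ x : Ordinal, x < ω ^ (d + 1) → ∃ a, x = cnf d a := by
  induction d with
  | zero =>
    intro x hx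
    rw [pow_one] at hx
    obtain ⟨n, hn⟩ := lt_omega0.1 hx
    exact ⟨fun _ => n, by rw [cnf_zero', hn]⟩
  | succ d IH =>
    intro x hx
    obtain ⟨p, r, hr, hx'⟩ := decomp (d + 1) hx
    obtain ⟨a, ha⟩ := IH r hr
    refine ⟨fun i => if i = d + 1 then p else a i, ?_⟩
    rw [cnf_succ]
    simp only [if_pos rfl]
    rw [hx', ha]
    congr 1
    exact cnf_congr d fun i hi => by rw [if_neg (by omega)]

lemma exists_deg {x : Ordinal} (hx : x < ω ^ (ω : Ordinal)) :
    ∃ d : ℕ, x < (ω : Ordinal) ^ (d + 1) := by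
  obtain ⟨c, hc, hxc⟩ := (lt_opow_of_isSuccLimit omega0_ne_zero isSuccLimit_omega0).1 hx
  obtain ⟨n, hn⟩ := lt_omega0.1 hc
  refine ⟨n, lt_of_lt_of_le ?_ (pow_le_pow' (Nat.le_succ n))⟩
  rwa [hn, opow_natCast] at hxc

lemma exists_repr_two {x y : Ordinal} (hx : x < ω ^ (ω : Ordinal)) (hy : y < ω ^ (ω : Ordinal)) :
    ∃ (d : ℕ) (a b : ℕ → ℕ), x = cnf d a ∧ y = cnf d b := by
  obtain ⟨d₁, h₁⟩ := exists_deg hx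
  obtain ⟨d₂, h₂⟩ := exists_deg hy
  obtain ⟨a, ha⟩ := cnf_exists (max d₁ d₂) x
    (lt_of_lt_of_le h₁ (pow_le_pow' (by omega)))
  obtain ⟨b, hb⟩ := cnf_exists (max d₁ d₂) y
    (lt_of_lt_of_le h₂ (pow_le_pow' (by omega)))
  exact ⟨_, a, b, ha, hb⟩

lemma weaker_of_nadd_eq {x σ μ : Ordinal} (hx : x < ω ^ (ω : Ordinal))
    (hσ : σ < ω ^ (ω : Ordinal)) (h : x ♯ σ = μ) : Weaker x μ := by
  obtain ⟨d, a, c, ha, hc⟩ := exists_repr_two hx hσ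
  refine ⟨d, a, fun i => a i + c i, ha, ?_, fun i => Nat.le_add_right _ _⟩
  rw [← h, ha, hc, cnf_nadd]

lemma nadd_eq_of_weaker {x μ : Ordinal} (h : Weaker x μ) : ∃ γ, γ ♯ x = μ := by
  obtain ⟨d, a, b, hx, hμ, hab⟩ := h
  refine ⟨cnf d (fun i => b i - a i), ?_⟩
  rw [hx, hμ, cnf_nadd]
  exact cnf_congr d fun i _ => Nat.sub_add_cancel (hab i)

lemma pow_mul_cnf_nadd (d : ℕ) (a : ℕ → ℕ) (n : ℕ) :
    ∀ x : Ordinal, x < ω ^ (n + 1) → ω ^ n * cnf d a ♯ x = ω ^ n * cnf d a + x := by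
  induction d generalizing a with
  | zero =>
    intro x hx
    rw [cnf_zero']
    exact pow_nat_nadd n (a 0) hx
  | succ d IH =>
    intro x hx
    have h1 : ω ^ n * cnf (d + 1) a
        = ω ^ (n + (d + 1)) * (a (d + 1) : Ordinal) + ω ^ n * cnf d a := by
      rw [cnf_succ, mul_add, ← mul_assoc, ← pow_add]
    have hlt : ω ^ n * cnf d a < ω ^ (n + (d + 1)) := by
      calc ω ^ n * cnf d a < ω ^ n * ω ^ (d + 1) :=
          (mul_lt_mul_iff_right₀ (pow_pos' n)).2 (cnf_lt d a)
        _ = ω ^ (n + (d + 1)) := by rw [← pow_add]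
    have hxlt : x < ω ^ (n + (d + 1)) :=
      lt_of_lt_of_le hx (pow_le_pow' (by omega))
    have hsum : ω ^ n * cnf d a + x < ω ^ (n + (d + 1) + 1) :=
      lt_of_lt_of_le (add_lt_pow hlt hxlt) (pow_le_pow' (by omega))
    have step1 : ω ^ (n + (d + 1)) * (a (d + 1) : Ordinal) + ω ^ n * cnf d a
        = ω ^ (n + (d + 1)) * (a (d + 1) : Ordinal) ♯ ω ^ n * cnf d a :=
      (pow_nat_nadd (n + (d + 1)) (a (d + 1))
        (lt_of_lt_of_le hlt (pow_le_pow' (by omega)))).symm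
    rw [h1, step1, nadd_assoc, IH a x hx,
      pow_nat_nadd (n + (d + 1)) (a (d + 1)) hsum, ← step1, add_assoc]

end AW

open AW in
/-- If `θ + ν ≤ μ ≤ θ ♯ ν` and `ν` is weaker than `μ`, then `θ + ν` is weaker than `μ`. -/
theorem add_weaker (ν θ μ : Ordinal)
    (hν : ν < ω ^ ω) (hθ : θ < ω ^ ω) (hμ : μ < ω ^ ω)
    (h₁ : θ + ν ≤ μ) (h₂ : μ ≤ θ ♯ ν) (h₃ : Weaker ν μ) :
    Weaker (θ + ν) μ := by
  by_cases hν0 : ν = 0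
  · subst hν0
    rw [add_zero] at h₁ ⊢
    rw [nadd_zero] at h₂
    have hμθ : μ = θ := le_antisymm h₂ h₁
    subst hμθ
    obtain ⟨d, hd⟩ := exists_deg hμ
    obtain ⟨a, ha⟩ := cnf_exists d _ hd
    exact ⟨d, a, a, ha, ha, fun i => le_rfl⟩
  · -- get the degree n of ν
    have hlog : (ω : Ordinal) ^ log ω ν ≤ ν := opow_log_le_self ω hν0
    have hlogsucc : ν < ω ^ Order.succ (log ω ν) := lt_opow_succ_log_self one_lt_omega0 ν
    have hloglt : log ω ν < ω := by
      have := lt_of_le_of_lt hlog hν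
      rwa [opow_lt_opow_iff_right one_lt_omega0] at this
    obtain ⟨n, hn⟩ := lt_omega0.1 hloglt
    have hpowle : (ω : Ordinal) ^ n ≤ ν := by rw [powo, ← hn]; exact hlog
    have hνlt : ν < (ω : Ordinal) ^ (n + 1) := by
      rw [powo]
      have : ((n + 1 : ℕ) : Ordinal) = Order.succ (log ω ν) := by
        rw [hn, Order.succ_eq_add_one, Nat.cast_succ]
      rw [this]
      exact hlogsucc
    -- decompose θ
    set q := θ / ω ^ n with hq
    set ρ := θ % ω ^ n with hρ
    have hθdecomp : ω ^ n * q + ρ = θ := Ordinal.div_add_mod θ (ω ^ n)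
    have hρlt : ρ < ω ^ n := Ordinal.mod_lt _ (pow_pos' n).ne'
    have hqlt : q < ω ^ (ω : Ordinal) := by
      refine lt_of_le_of_lt ?_ hθ
      calc q ≤ ω ^ n * q := Ordinal.le_mul_right q (pow_pos' n)
        _ ≤ ω ^ n * q + ρ := le_self_add
        _ = θ := hθdecomp
    obtain ⟨dq, hdq⟩ := exists_deg hqlt
    obtain ⟨aq, haq⟩ := cnf_exists dq q hdq
    -- θ + ν = ω^n * q ♯ ν
    have hA : θ + ν = ω ^ n * q + ν := by
      rw [← hθdecomp, add_assoc]
      congr 1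
      exact Ordinal.add_absorp (b := (n : Ordinal)) (by rwa [opow_natCast])
        (by rwa [opow_natCast])
    have hB : ω ^ n * q + ν = ω ^ n * q ♯ ν := by
      rw [haq]
      exact (pow_mul_cnf_nadd dq aq n ν hνlt).symm
    obtain ⟨γ, hγ⟩ := nadd_eq_of_weaker h₃
    have hγθ : γ ≤ θ := by
      have : γ ♯ ν ≤ θ ♯ ν := by rw [hγ]; exact h₂
      exact le_of_nadd_le_nadd_right this
    have hθ''γ : ω ^ n * q ≤ γ := by
      have : (ω ^ n * q) ♯ ν ≤ γ ♯ ν := by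
        rw [← hB, ← hA, hγ]; exact h₁
      exact le_of_nadd_le_nadd_right this
    -- γ = ω^n*q + σ with σ < ω^n
    set σ := γ - ω ^ n * q with hσdef
    have hγdecomp : ω ^ n * q + σ = γ := Ordinal.add_sub_cancel_of_le hθ''γ
    have hσρ : σ ≤ ρ := by
      have : ω ^ n * q + σ ≤ ω ^ n * q + ρ := by
        rw [hγdecomp, hθdecomp]; exact hγθ
      exact le_of_add_le_add_left this
    have hσlt : σ < (ω : Ordinal) ^ (n + 1) :=
      lt_of_le_of_lt hσρ (lt_of_lt_of_le hρlt (pow_le_pow' (Nat.le_succ n)))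
    have hG : γ = ω ^ n * q ♯ σ := by
      rw [← hγdecomp, haq]
      exact (pow_mul_cnf_nadd dq aq n σ hσlt).symm
    have hH : (θ + ν) ♯ σ = μ := by
      rw [hA, hB, ← hγ, hG, nadd_assoc, nadd_assoc, nadd_comm ν σ]
    refine weaker_of_nadd_eq ?_ ?_ hH
    · exact lt_of_le_of_lt h₁ hμ
    · refine lt_of_le_of_lt ?_ hθ
      exact le_trans hσρ (le_trans (le_add_self) hθdecomp.le)
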